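/- Let a₀, …, a_g be positive integers with gcd(a₀,…,a_g) = 1, and for each i let e_i = gcd(a₀,…,a_i), n_i = e_{i−1}/e_i (with e₀ = a₀, n₀ = 1). If the semigroup Γ = ⟨a₀,…,a_g⟩ is free, i.e. n_i·a_i ∈ ⟨a₀,…,a_{i−1}⟩ for every i = 1,…,g, then Γ is a complete intersection numerical semigroup; in particular its conductor equals ∑_{i=1}^{g} (n_i − 1)·a_i − a₀ + 1. -/

import Mathlib

open MvPolynomial

namespace Stmt3Aux

variable {g : ℕ} {a e n : ℕ → ℕ}

lemma e0 (he : ∀ i, e i = (Finset.range (i + 1)).gcd a) : e 0 = a 0 := by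
  rw [he 0]; simp

lemma estep (he : ∀ i, e i = (Finset.range (i + 1)).gcd a) (i : ℕ) :
    e (i + 1) = Nat.gcd (a (i + 1)) (e i) := by
  rw [he (i+1), he i, Finset.range_add_one, Finset.gcd_insert]
  rfl

lemma edvd (he : ∀ i, e i = (Finset.range (i + 1)).gcd a) {i j : ℕ} (h : j ≤ i) :
    e i ∣ a j := by
  rw [he i]; exact Finset.gcd_dvd (Finset.mem_range.2 (by omega))

lemma epos (ha0 : 0 < a 0) (he : ∀ i, e i = (Finset.range (i + 1)).gcd a) (i : ℕ) :
    0 < e i := by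
  rcases Nat.eq_zero_or_pos (e i) with h | h
  · exfalso; have := edvd he (Nat.zero_le i); rw [h] at this; omega
  · exact h

lemma npos (ha0 : 0 < a 0) (he : ∀ i, e i = (Finset.range (i + 1)).gcd a)
    (hn : ∀ i, 1 ≤ i → i ≤ g → n i * e i = e (i - 1)) {i : ℕ} (h1 : 1 ≤ i) (h2 : i ≤ g) :
    0 < n i := by
  have h3 := hn i h1 h2
  have h4 := epos ha0 he (i - 1)
  rcases Nat.eq_zero_or_pos (n i) with h | h
  · rw [h, zero_mul] at h3; omega
  · exact h

/-- order of `a i` mod `e (i-1)` is `n i`. -/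
lemma order (ha0 : 0 < a 0) (he : ∀ i, e i = (Finset.range (i + 1)).gcd a)
    (hn : ∀ i, 1 ≤ i → i ≤ g → n i * e i = e (i - 1)) {k d : ℕ} (h2 : k + 1 ≤ g)
    (hd : e k ∣ d * a (k + 1)) : n (k + 1) ∣ d := by
  have hE : 0 < e (k+1) := epos ha0 he (k+1)
  obtain ⟨b, hb⟩ : e (k+1) ∣ a (k+1) := edvd he (le_refl (k+1))
  have hnk : n (k+1) * e (k+1) = e k := by simpa using hn (k+1) (by omega) h2
  have hcop : Nat.Coprime (n (k+1)) b := by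
    have h1 : Nat.gcd (a (k+1)) (e k) = e (k+1) := (estep he k).symm
    rw [hb, ← hnk, mul_comm (e (k+1)) b, Nat.gcd_mul_right] at h1
    have h5 : Nat.gcd b (n (k+1)) = 1 := by
      rcases Nat.eq_zero_or_pos (Nat.gcd b (n (k+1))) with h | h
      · rw [h, zero_mul] at h1; omega
      · nlinarith [h1]
    exact Nat.Coprime.symm h5
  have h6 : (n (k+1)) * e (k+1) ∣ (d * b) * e (k+1) := by
    rw [hnk, mul_assoc, mul_comm b (e (k+1)), ← hb]; exact hd
  have h3 : n (k+1) ∣ d * b := (Nat.mul_dvd_mul_iff_right hE).1 h6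
  exact Nat.Coprime.dvd_of_dvd_mul_right hcop h3

/-- uniqueness of reduced representations -/
lemma uniq (ha0 : 0 < a 0) (he : ∀ i, e i = (Finset.range (i + 1)).gcd a)
    (hn : ∀ i, 1 ≤ i → i ≤ g → n i * e i = e (i - 1)) :
    ∀ i, i ≤ g → ∀ m m' : ℕ → ℕ,
    (∀ j, 1 ≤ j → j ≤ i → m j < n j) → (∀ j, 1 ≤ j → j ≤ i → m' j < n j) →
    (∑ j ∈ Finset.range (i + 1), m j * a j) = (∑ j ∈ Finset.range (i + 1), m' j * a j) →
    ∀ j, j ≤ i → m j = m' j := by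
  intro i
  induction i with
  | zero =>
    intro _ m m' _ _ hsum j hj
    interval_cases j
    exact Nat.eq_of_mul_eq_mul_right ha0 (by simpa using hsum)
  | succ k ih =>
    intro hk m m' hm hm' hsum j hj
    have key : ∀ mm mm' : ℕ → ℕ, (∀ j, 1 ≤ j → j ≤ k + 1 → mm j < n j) →
        (∑ j ∈ Finset.range (k + 2), mm j * a j) = (∑ j ∈ Finset.range (k + 2), mm' j * a j) →
        mm' (k+1) ≤ mm (k+1) → mm (k+1) = mm' (k+1) := by
      intro mm mm' hmm hs hle
      have hdvd : ∀ s : ℕ → ℕ, e k ∣ ∑ j ∈ Finset.range (k + 1), s j * a j := by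
        intro s
        exact Finset.dvd_sum (fun j hj => Dvd.dvd.mul_left (edvd he (by
          simp only [Finset.mem_range] at hj; omega)) _)
      have expand : ∀ s : ℕ → ℕ, ∑ j ∈ Finset.range (k + 2), s j * a j =
          (∑ j ∈ Finset.range (k + 1), s j * a j) + s (k+1) * a (k+1) :=
        fun s => Finset.sum_range_succ _ _
      rw [expand mm, expand mm'] at hs
      have hmono : mm' (k+1) * a (k+1) ≤ mm (k+1) * a (k+1) := Nat.mul_le_mul_right _ hle
      have hsub : (mm (k+1) - mm' (k+1)) * a (k+1) =
          (∑ j ∈ Finset.range (k + 1), mm' j * a j) - (∑ j ∈ Finset.range (k + 1), mm j * a j) := by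
        rw [Nat.sub_mul]; omega
      have hdd : e k ∣ (mm (k+1) - mm' (k+1)) * a (k+1) := by
        rw [hsub]; exact Nat.dvd_sub (hdvd mm') (hdvd mm)
      have h7 := order (g := g) ha0 he hn hk hdd
      have hlt : mm (k+1) - mm' (k+1) < n (k+1) := by
        have := hmm (k+1) (by omega) (le_refl _); omega
      have h8 : mm (k+1) - mm' (k+1) = 0 := Nat.eq_zero_of_dvd_of_lt h7 hlt |>.symm ▸ rfl
      omega
    have heq : m (k+1) = m' (k+1) := by
      rcases le_total (m' (k+1)) (m (k+1)) with h | h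
      · exact key m m' hm hsum h
      · exact (key m' m hm' hsum.symm h).symm
    rcases Nat.lt_or_ge j (k+1) with hj' | hj'
    · -- use ih on truncated sums
      have expand : ∀ s : ℕ → ℕ, ∑ j ∈ Finset.range (k + 2), s j * a j =
          (∑ j ∈ Finset.range (k + 1), s j * a j) + s (k+1) * a (k+1) :=
        fun s => Finset.sum_range_succ _ _
      rw [expand m, expand m', heq] at hsum
      have hsum' : (∑ j ∈ Finset.range (k + 1), m j * a j) =
          ∑ j ∈ Finset.range (k + 1), m' j * a j := by omega
      exact ih (by omega) m m' (fun j h1 h2 => hm j h1 (by omega))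
        (fun j h1 h2 => hm' j h1 (by omega)) hsum' j (by omega)
    · have : j = k + 1 := by omega
      rw [this]; exact heq


/-- extraction of representations from closure membership -/
lemma closure_rep {a : ℕ → ℕ} {S : Set ℕ} {k : ℕ} (hS : ∀ j ∈ S, j < k) {m : ℕ}
    (hm : m ∈ AddSubmonoid.closure (a '' S)) :
    ∃ c : ℕ → ℕ, (∀ j, c j ≠ 0 → j ∈ S) ∧ m = ∑ j ∈ Finset.range k, c j * a j := by
  induction hm using AddSubmonoid.closure_induction with
  | mem x hx =>
    obtain ⟨j, hj, rfl⟩ := hx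
    refine ⟨fun j' => if j' = j then 1 else 0, fun j' h => by
      by_cases hj' : j' = j
      · rw [hj']; exact hj
      · simp [hj'] at h, ?_⟩
    have : ∀ j1 ∈ Finset.range k, (fun j' => if j' = j then 1 else 0) j1 * a j1
        = if j1 = j then a j1 else 0 := by intro j1 _; by_cases h : j1 = j <;> simp [h]
    rw [Finset.sum_congr rfl this, Finset.sum_ite_eq' (Finset.range k) j a]
    simp [Finset.mem_range.2 (hS j hj)]
  | zero => exact ⟨fun _ => 0, fun j h => absurd rfl h, by simp⟩
  | add x y hx hy ihx ihy =>
    obtain ⟨c1, hc1, rfl⟩ := ihx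
    obtain ⟨c2, hc2, rfl⟩ := ihy
    refine ⟨fun j => c1 j + c2 j, fun j h => ?_, by rw [← Finset.sum_add_distrib]; congr 1; ext j; ring⟩
    simp only [] at h
    rcases Nat.eq_zero_or_pos (c1 j) with h1 | h1
    · exact hc2 j (by omega)
    · exact hc1 j (by omega)


section Cond
variable {g : ℕ} {a e n : ℕ → ℕ}

lemma Fnum_ge (ha : ∀ i, i ≤ g → 0 < a i) (he : ∀ i, e i = (Finset.range (i + 1)).gcd a)
    (hn : ∀ i, 1 ≤ i → i ≤ g → n i * e i = e (i - 1)) :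
    ∀ i, i ≤ g → -(e i : ℤ) ≤ ∑ j ∈ Finset.Icc 1 i, ((n j : ℤ) - 1) * a j - a 0 := by
  intro i
  induction i with
  | zero => intro _; simp [e0 he]
  | succ k ih =>
    intro hk
    rw [Finset.sum_Icc_succ_top (by omega : 1 ≤ k + 1)]
    have h1 := ih (by omega)
    have hA : e (k+1) ≤ a (k+1) :=
      Nat.le_of_dvd (ha (k+1) hk) (edvd he (le_refl _))
    have hN : 1 ≤ n (k+1) := npos (ha 0 (by omega)) he hn (by omega) hk
    have hne : n (k+1) * e (k+1) = e k := by simpa using hn (k+1) (by omega) hk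
    have hcast : ((n (k+1) : ℤ) - 1) * (e (k+1) : ℤ) = (e k : ℤ) - e (k+1) := by
      push_cast [← hne]; ring
    have hstep : ((e k : ℤ)) - e (k+1) ≤ ((n (k+1) : ℤ) - 1) * a (k+1) := by
      rw [← hcast]
      have h1n : (1:ℤ) ≤ (n (k+1) : ℤ) := by exact_mod_cast hN
      have h2 : (e (k+1) : ℤ) ≤ (a (k+1) : ℤ) := by exact_mod_cast hA
      have h3 : (0:ℤ) ≤ (e (k+1) : ℤ) := by positivity
      nlinarith
    linarith

lemma mem_of_big (ha : ∀ i, i ≤ g → 0 < a i) (he : ∀ i, e i = (Finset.range (i + 1)).gcd a)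
    (hn : ∀ i, 1 ≤ i → i ≤ g → n i * e i = e (i - 1)) :
    ∀ i, i ≤ g → ∀ m : ℕ, e i ∣ m →
    (∑ j ∈ Finset.Icc 1 i, ((n j : ℤ) - 1) * a j - a 0 < (m : ℤ)) →
    m ∈ AddSubmonoid.closure (a '' Set.Iic i) := by
  intro i
  induction i with
  | zero =>
    intro _ m hdvd _
    obtain ⟨t, rfl⟩ := hdvd
    rw [e0 he]
    have hmem : a 0 ∈ a '' Set.Iic 0 := ⟨0, by simp, rfl⟩
    have h2 := nsmul_mem (AddSubmonoid.subset_closure hmem : a 0 ∈ AddSubmonoid.closure (a '' Set.Iic 0)) t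
    simpa [mul_comm, smul_eq_mul] using h2
  | succ k ih =>
    intro hk m hdvd hbig
    set A := a (k+1) with hA
    set E := e k with hE
    set N := n (k+1) with hNdef
    have hN : 1 ≤ N := npos (ha 0 (by omega)) he hn (by omega) hk
    have hgcdAE : Nat.gcd A E = e (k+1) := (estep he k).symm
    obtain ⟨s, hs⟩ := hdvd
    -- Bezout
    have hbez : (e (k+1) : ℤ) = A * Nat.gcdA A E + E * Nat.gcdB A E := by
      rw [← hgcdAE]; exact Nat.gcd_eq_gcd_ab A E
    set x := Nat.gcdA A E
    set y := Nat.gcdB A E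
    set j : ℤ := ((s : ℤ) * x) % N with hjdef
    have hNpos : (0:ℤ) < N := by exact_mod_cast hN
    have hj0 : 0 ≤ j := Int.emod_nonneg _ (by omega)
    have hjN : j < N := Int.emod_lt_of_pos _ hNpos
    obtain ⟨t, ht⟩ : (N:ℤ) ∣ ((s:ℤ) * x - j) := Int.dvd_self_sub_of_emod_eq rfl
    have hne : N * e (k+1) = E := by simpa using hn (k+1) (by omega) hk
    obtain ⟨b, hb⟩ : e (k+1) ∣ A := edvd he (le_refl (k+1))
    have hENA : (E:ℤ) ∣ (N:ℤ) * A := by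
      have : (N * A : ℕ) = E * b := by rw [hb, ← hne]; ring
      exact ⟨b, by exact_mod_cast this⟩
    have key : (E:ℤ) ∣ (m:ℤ) - j * A := by
      have hm : (m:ℤ) = e (k+1) * s := by exact_mod_cast hs
      have : (m:ℤ) - j * A = (N * A) * t + E * (s * y) := by
        rw [hm, hbez]
        have : (s:ℤ) * x - j = N * t := ht
        nlinarith [this]
      rw [this]
      exact dvd_add (Dvd.dvd.mul_right hENA t) (dvd_mul_right (E:ℤ) ((s:ℤ) * y))
    have hFk := Fnum_ge ha he hn k (by omega)
    have hbig' : ∑ j' ∈ Finset.Icc 1 k, ((n j' : ℤ) - 1) * a j' - a 0 < (m:ℤ) - j * A := by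
      rw [Finset.sum_Icc_succ_top (by omega : 1 ≤ k + 1)] at hbig
      have hj' : j * A ≤ ((N:ℤ) - 1) * A := by
        have : (0:ℤ) ≤ A := by positivity
        nlinarith
      linarith
    -- m - j*A ≥ 0
    have key2 := key
    obtain ⟨u, hu⟩ := key2
    have hEpos : (0:ℤ) < E := by exact_mod_cast epos (ha 0 (by omega)) he k
    have h9 : -(E:ℤ) < (m:ℤ) - j * A := by linarith
    have hu0 : 0 ≤ u := by
      by_contra hneg
      push_neg at hneg
      have hle : u ≤ -1 := by omega
      have h10 : (E:ℤ) * u ≤ (E:ℤ) * (-1) := mul_le_mul_of_nonneg_left hle hEpos.le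
      rw [hu] at h9
      linarith
    have hmjA : 0 ≤ (m:ℤ) - j * A := by
      rw [hu]; exact mul_nonneg hEpos.le hu0
    set jn := j.toNat with hjn
    have hjcast : (jn : ℤ) = j := Int.toNat_of_nonneg hj0
    have hge : jn * A ≤ m := by
      have : ((jn * A : ℕ) : ℤ) ≤ (m:ℤ) := by push_cast [hjcast]; linarith
      exact_mod_cast this
    set m' := m - jn * A with hm'
    have hm'cast : (m' : ℤ) = (m:ℤ) - j * A := by
      push_cast [hm', Nat.cast_sub hge, hjcast]; ring
    have hdvd' : E ∣ m' := by
      have : (E:ℤ) ∣ (m':ℤ) := by rw [hm'cast]; exact key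
      exact_mod_cast this
    have hkg : k ≤ g := by omega
    have harg : ∑ j' ∈ Finset.Icc 1 k, ((n j' : ℤ) - 1) * a j' - a 0 < (m' : ℤ) := by
      rw [hm'cast]; exact hbig'
    have hmem' := ih hkg m' hdvd' harg
    have hsub : AddSubmonoid.closure (a '' Set.Iic k) ≤
        AddSubmonoid.closure (a '' Set.Iic (k+1)) :=
      AddSubmonoid.closure_mono (Set.image_mono (fun z hz => by simp only [Set.mem_Iic] at *; omega))
    have hmemA : A ∈ a '' Set.Iic (k+1) := ⟨k+1, by simp, rfl⟩
    have hmemjA : jn * A ∈ AddSubmonoid.closure (a '' Set.Iic (k+1)) := by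
      have h11 := nsmul_mem (AddSubmonoid.subset_closure hmemA : A ∈ AddSubmonoid.closure (a '' Set.Iic (k+1))) jn
      simpa [smul_eq_mul] using h11
    have : m' + jn * A ∈ AddSubmonoid.closure (a '' Set.Iic (k+1)) :=
      AddSubmonoid.add_mem _ (hsub hmem') hmemjA
    simpa [hm', Nat.sub_add_cancel hge] using this

lemma reduce_coeffs {g : ℕ} {a e n : ℕ → ℕ}
    (ha : ∀ i, i ≤ g → 0 < a i) (he : ∀ i, e i = (Finset.range (i + 1)).gcd a)
    (hn : ∀ i, 1 ≤ i → i ≤ g → n i * e i = e (i - 1))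
    (hfree : ∀ i, 1 ≤ i → i ≤ g → n i * a i ∈ AddSubmonoid.closure (a '' Set.Iio i)) :
    ∀ i, i ≤ g → ∀ c : ℕ → ℕ, ∃ c' : ℕ → ℕ, (∀ j, 1 ≤ j → j ≤ i → c' j < n j) ∧
      ∑ j ∈ Finset.range (i + 1), c' j * a j = ∑ j ∈ Finset.range (i + 1), c j * a j := by
  intro i
  induction i with
  | zero => exact fun _ c => ⟨c, fun j h1 h2 => by omega, rfl⟩
  | succ k ih =>
    intro hk c
    have hN : 0 < n (k+1) := npos (ha 0 (by omega)) he hn (by omega) hk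
    obtain ⟨d, hd1, hd2⟩ := closure_rep (a := a) (S := Set.Iio (k+1)) (k := k+1)
      (fun j hj => hj) (hfree (k+1) (by omega) hk)
    set q := c (k+1) / n (k+1) with hq
    set r := c (k+1) % n (k+1) with hr
    have hqr : q * n (k+1) + r = c (k+1) := by rw [hq, hr, mul_comm]; exact Nat.div_add_mod _ _
    have hrN : r < n (k+1) := Nat.mod_lt _ hN
    obtain ⟨c0, hc01, hc02⟩ := ih (by omega) (fun j => c j + q * d j)
    refine ⟨fun j => if j = k+1 then r else c0 j, fun j h1 h2 => ?_, ?_⟩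
    · by_cases hj : j = k+1
      · simpa [hj] using hrN
      · simpa [hj] using hc01 j h1 (by omega)
    · rw [Finset.sum_range_succ, Finset.sum_range_succ (f := fun j => c j * a j)]
      have h3 : ∀ j ∈ Finset.range (k+1),
          (if j = k+1 then r else c0 j) * a j = c0 j * a j := by
        intro j hj
        simp only [Finset.mem_range] at hj
        simp [Nat.ne_of_lt hj]
      rw [Finset.sum_congr rfl h3, hc02]
      have hbeta : (fun j => if j = k+1 then r else c0 j) (k+1) = r := by simp
      rw [hbeta]
      have h4 : ∑ j ∈ Finset.range (k+1), (c j + q * d j) * a j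
          = (∑ j ∈ Finset.range (k+1), c j * a j) + q * ∑ j ∈ Finset.range (k+1), d j * a j := by
        rw [Finset.mul_sum, ← Finset.sum_add_distrib]
        exact Finset.sum_congr rfl (fun j _ => by ring)
      rw [h4, ← hd2]
      have : q * (n (k+1) * a (k+1)) + r * a (k+1) = c (k+1) * a (k+1) := by
        rw [← hqr]; ring
      omega

lemma conductor_formula {g : ℕ} {a e n : ℕ → ℕ}
    (ha : ∀ i, i ≤ g → 0 < a i) (he : ∀ i, e i = (Finset.range (i + 1)).gcd a)
    (hgcd : e g = 1)
    (hn : ∀ i, 1 ≤ i → i ≤ g → n i * e i = e (i - 1))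
    (hfree : ∀ i, 1 ≤ i → i ≤ g → n i * a i ∈ AddSubmonoid.closure (a '' Set.Iio i)) :
    ((sInf {c : ℕ | ∀ m : ℕ, c ≤ m →
        m ∈ AddSubmonoid.closure (a '' Set.Iic g)} : ℕ) : ℤ)
      = ∑ i ∈ Finset.Icc 1 g, ((n i : ℤ) - 1) * a i - a 0 + 1 := by
  set F : ℤ := ∑ i ∈ Finset.Icc 1 g, ((n i : ℤ) - 1) * a i - a 0 with hF
  have hF1 : -1 ≤ F := by
    have := Fnum_ge ha he hn g (le_refl g)
    rw [hgcd] at this; exact_mod_cast this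
  set S := {c : ℕ | ∀ m : ℕ, c ≤ m → m ∈ AddSubmonoid.closure (a '' Set.Iic g)} with hS
  have hupper : (F + 1).toNat ∈ S := by
    intro m hm
    apply mem_of_big ha he hn g (le_refl g) m (by rw [hgcd]; exact one_dvd m)
    rw [← hF]
    have : ((F+1).toNat : ℤ) ≤ (m : ℤ) := by exact_mod_cast hm
    rw [Int.toNat_of_nonneg (by omega)] at this
    omega
  have hlower : ∀ cc ∈ S, (F + 1).toNat ≤ cc := by
    intro cc hcc
    by_contra hlt
    push_neg at hlt
    have hF0 : 0 ≤ F := by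
      rcases le_or_gt 0 F with h | h
      · exact h
      · exfalso; have : (F+1).toNat = 0 := by omega
        omega
    set mF := F.toNat with hmF
    have hmFcast : (mF : ℤ) = F := Int.toNat_of_nonneg hF0
    have hcc' : cc ≤ mF := by
      have : ((F+1).toNat : ℤ) = F + 1 := Int.toNat_of_nonneg (by omega)
      omega
    have hmem : mF ∈ AddSubmonoid.closure (a '' Set.Iic g) := hcc mF hcc'
    obtain ⟨c, hc1, hc2⟩ := closure_rep (a := a) (S := Set.Iic g) (k := g+1)
      (fun j hj => by simpa [Nat.lt_succ_iff] using hj) hmem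
    obtain ⟨c', hc'1, hc'2⟩ := reduce_coeffs ha he hn hfree g (le_refl g) c
    rw [← hc2] at hc'2
    -- natural number sum equation
    have hnat : (∑ j ∈ Finset.Icc 1 g, (n j - 1) * a j) = a 0 + mF := by
      have hcastsum : ((∑ j ∈ Finset.Icc 1 g, (n j - 1) * a j : ℕ) : ℤ)
          = ∑ j ∈ Finset.Icc 1 g, ((n j : ℤ) - 1) * a j := by
        push_cast
        refine Finset.sum_congr rfl (fun j hj => ?_)
        simp only [Finset.mem_Icc] at hj
        have : 1 ≤ n j := npos (ha 0 (by omega)) he hn hj.1 hj.2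
        have : ((n j - 1 : ℕ) : ℤ) = (n j : ℤ) - 1 := by omega
        rw [this]
      have : ((∑ j ∈ Finset.Icc 1 g, (n j - 1) * a j : ℕ) : ℤ) = (a 0 : ℤ) + mF := by
        rw [hcastsum, hmFcast, hF]; ring
      exact_mod_cast this
    -- two reduced representations
    set m1 : ℕ → ℕ := fun j => if j = 0 then 0 else n j - 1 with hm1
    set m2 : ℕ → ℕ := fun j => if j = 0 then c' 0 + 1 else c' j with hm2
    have hsum1 : ∑ j ∈ Finset.range (g+1), m1 j * a j
        = ∑ j ∈ Finset.Icc 1 g, (n j - 1) * a j := by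
      rw [Finset.range_eq_Ico, Finset.sum_eq_sum_Ico_succ_bot (by omega)]
      have h0 : m1 0 = 0 := by simp [hm1]
      rw [h0, zero_mul, zero_add, ← Finset.Ico_add_one_right_eq_Icc]
      refine Finset.sum_congr rfl (fun j hj => ?_)
      simp only [Finset.mem_Ico] at hj
      have hval : m1 j = n j - 1 := if_neg (by omega : ¬ j = 0)
      rw [hval]
    have hsum2 : ∑ j ∈ Finset.range (g+1), m2 j * a j = a 0 + mF := by
      have hL : ∑ j ∈ Finset.range (g+1), m2 j * a j
          = m2 0 * a 0 + ∑ j ∈ Finset.Ico 1 (g+1), m2 j * a j := by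
        rw [Finset.range_eq_Ico]; exact Finset.sum_eq_sum_Ico_succ_bot (by omega) _
      have hR : ∑ j ∈ Finset.range (g+1), c' j * a j
          = c' 0 * a 0 + ∑ j ∈ Finset.Ico 1 (g+1), c' j * a j := by
        rw [Finset.range_eq_Ico]; exact Finset.sum_eq_sum_Ico_succ_bot (by omega) _
      have h02 : m2 0 = c' 0 + 1 := by simp [hm2]
      have heq2 : ∑ j ∈ Finset.Ico 1 (g+1), m2 j * a j
          = ∑ j ∈ Finset.Ico 1 (g+1), c' j * a j :=
        Finset.sum_congr rfl (fun j hj => by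
          simp only [Finset.mem_Ico] at hj
          have hval : m2 j = c' j := if_neg (by omega : ¬ j = 0)
          rw [hval])
      have h5 : (c' 0 + 1) * a 0 = a 0 + c' 0 * a 0 := by ring
      rw [hL, h02, heq2]
      rw [hc'2] at hR
      omega
    have hkey := uniq (ha 0 (by omega)) he hn g (le_refl g) m1 m2
      (fun j h1 h2 => by
        simp only [hm1, if_neg (by omega : ¬ j = 0)]
        have := npos (ha 0 (by omega)) he hn h1 h2
        omega)
      (fun j h1 h2 => by
        simp only [hm2, if_neg (by omega : ¬ j = 0)]
        exact hc'1 j h1 h2)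
      (by rw [hsum1, hsum2, hnat]) 0 (by omega)
    simp [hm1, hm2] at hkey
  have hsInf : sInf S = (F + 1).toNat :=
    le_antisymm (Nat.sInf_le hupper) (le_csInf ⟨_, hupper⟩ hlower)
  rw [hS] at hsInf
  rw [hsInf, Int.toNat_of_nonneg (by omega), hF]

end Cond

lemma prod_monomial_one {ι σ : Type*} (s : Finset ι) (u : ι → (σ →₀ ℕ)) :
    (∏ j ∈ s, (monomial (u j) (1:ℂ))) = monomial (∑ j ∈ s, u j) 1 := by
  classical
  induction s using Finset.cons_induction with
  | empty => simp
  | cons j s hj ih => rw [Finset.prod_cons, Finset.sum_cons, ih, monomial_mul, one_mul]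

variable {g : ℕ}

/-- exponent vector from coefficient function -/
noncomputable def cvec (g : ℕ) (c : Fin g → ℕ → ℕ) (l : Fin g) : Fin (g+1) →₀ ℕ :=
  Finsupp.equivFunOnFinite.symm (fun j => c l (j : ℕ))

@[simp] lemma cvec_apply (c : Fin g → ℕ → ℕ) (l : Fin g) (j : Fin (g+1)) :
    cvec g c l j = c l (j : ℕ) := rfl

/-- the binomial generators -/
noncomputable def fpoly (g : ℕ) (n : ℕ → ℕ) (c : Fin g → ℕ → ℕ) (l : Fin g) :
    MvPolynomial (Fin (g+1)) ℂ :=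
  X l.succ ^ n ((l:ℕ)+1) - monomial (cvec g c l) 1

/-- substitution maps collapsing the first i+1 variables to powers of X 0 -/
noncomputable def psi (g i : ℕ) (a : ℕ → ℕ) :
    MvPolynomial (Fin (g+1)) ℂ →ₐ[ℂ] MvPolynomial (Fin (g+1)) ℂ :=
  aeval (fun j : Fin (g+1) =>
    if (j:ℕ) ≤ i then (X 0 : MvPolynomial (Fin (g+1)) ℂ) ^ a (j:ℕ) else X j)

/-- exponent transformation corresponding to psi -/
noncomputable def Tvec (g i : ℕ) (a : ℕ → ℕ) (d : Fin (g+1) →₀ ℕ) : Fin (g+1) →₀ ℕ :=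
  ∑ j : Fin (g+1), d j •
    (if (j:ℕ) ≤ i then Finsupp.single (0 : Fin (g+1)) (a (j:ℕ)) else Finsupp.single j 1)

lemma psi_monomial (i : ℕ) (a : ℕ → ℕ) (d : Fin (g+1) →₀ ℕ) (r : ℂ) :
    psi g i a (monomial d r) = monomial (Tvec g i a d) r := by
  rw [psi, aeval_monomial]
  rw [Finsupp.prod_fintype _ _ (fun j => pow_zero _)]
  have h1 : ∀ j : Fin (g+1),
      (if (j:ℕ) ≤ i then (X 0 : MvPolynomial (Fin (g+1)) ℂ) ^ a (j:ℕ) else X j) ^ (d j)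
      = monomial (d j • (if (j:ℕ) ≤ i then Finsupp.single (0 : Fin (g+1)) (a (j:ℕ))
          else Finsupp.single j 1)) 1 := by
    intro j
    split
    · rw [X_pow_eq_monomial, monomial_pow, one_pow]
    · rw [X, monomial_pow, one_pow]
  rw [Finset.prod_congr rfl (fun j _ => h1 j), prod_monomial_one, Tvec]
  rw [algebraMap_eq, C_mul_monomial, mul_one]

/-- weight of a monomial -/
def wt (g : ℕ) (a : ℕ → ℕ) (d : Fin (g+1) →₀ ℕ) : ℕ := ∑ j : Fin (g+1), d j * a (j:ℕ)

lemma phi_monomial (a : ℕ → ℕ) (d : Fin (g+1) →₀ ℕ) (r : ℂ) :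
    (aeval (fun i : Fin (g + 1) => (Polynomial.X : Polynomial ℂ) ^ a i)) (monomial d r)
      = Polynomial.C r * Polynomial.X ^ (wt g a d) := by
  rw [aeval_monomial]
  rw [Finsupp.prod_fintype _ _ (fun j => pow_zero _)]
  have h1 : ∀ j : Fin (g+1), ((Polynomial.X : Polynomial ℂ) ^ a (j:ℕ)) ^ (d j)
      = Polynomial.X ^ (d j * a (j:ℕ)) := by
    intro j; rw [← pow_mul, mul_comm]
  rw [Finset.prod_congr rfl (fun j _ => h1 j), Finset.prod_pow_eq_pow_sum, wt]
  rfl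

lemma Tvec_apply0 (i : ℕ) (a : ℕ → ℕ) (d : Fin (g+1) →₀ ℕ) :
    Tvec g i a d 0 = ∑ j : Fin (g+1), (if (j:ℕ) ≤ i then d j * a (j:ℕ) else 0) := by
  rw [Tvec, Finsupp.finset_sum_apply]
  refine Finset.sum_congr rfl (fun j _ => ?_)
  split_ifs with h
  · simp
  · have hne : j ≠ 0 := by intro hj; rw [hj] at h; exact h (by simp)
    simp [Finsupp.single_eq_of_ne' hne]

lemma Tvec_apply_gt (i : ℕ) (a : ℕ → ℕ) (d : Fin (g+1) →₀ ℕ) (j' : Fin (g+1))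
    (hj' : i < (j':ℕ)) : Tvec g i a d j' = d j' := by
  have hne0 : (0 : Fin (g+1)) ≠ j' := by
    intro hj; rw [← hj] at hj'; simp at hj'
  rw [Tvec, Finsupp.finset_sum_apply]
  rw [Finset.sum_eq_single j']
  · rw [if_neg (by omega)]; simp
  · intro j _ hne
    split_ifs with h
    · simp [Finsupp.single_eq_of_ne' hne0]
    · simp [Finsupp.single_eq_of_ne' hne]
  · intro h; exact absurd (Finset.mem_univ j') h

lemma Tvec_apply_mid (i : ℕ) (a : ℕ → ℕ) (d : Fin (g+1) →₀ ℕ) (j' : Fin (g+1))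
    (h1 : 1 ≤ (j':ℕ)) (h2 : (j':ℕ) ≤ i) : Tvec g i a d j' = 0 := by
  rw [Tvec, Finsupp.finset_sum_apply]
  refine Finset.sum_eq_zero (fun j _ => ?_)
  split_ifs with h
  · have hne : (0 : Fin (g+1)) ≠ j' := by intro hj; rw [← hj] at h1; simp at h1
    simp [Finsupp.single_eq_of_ne' hne]
  · have hne : j ≠ j' := by intro hj; rw [hj] at h; omega
    simp [Finsupp.single_eq_of_ne' hne]




section Alg2
variable {g : ℕ}

lemma finsum_to_range (u : Fin (g+1) → ℕ) (v : ℕ → ℕ)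
    (hv : ∀ j : Fin (g+1), v (j:ℕ) = u j) :
    ∑ j : Fin (g+1), u j = ∑ jn ∈ Finset.range (g+1), v jn := by
  rw [← Fin.sum_univ_eq_sum_range]
  exact Finset.sum_congr rfl (fun j _ => (hv j).symm)

/-- extend a `Finsupp` on `Fin (g+1)` to a function on `ℕ` -/
def dfun (d : Fin (g+1) →₀ ℕ) : ℕ → ℕ := fun jn => if h : jn < g+1 then d ⟨jn, h⟩ else 0

@[simp] lemma dfun_coe (d : Fin (g+1) →₀ ℕ) (j : Fin (g+1)) : dfun d (j:ℕ) = d j := by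
  rw [dfun, dif_pos j.isLt, Fin.eta]

lemma range_ite_sum {i : ℕ} (hi : i ≤ g) (x : ℕ → ℕ) :
    ∑ jn ∈ Finset.range (g+1), (if jn ≤ i then x jn else 0)
      = ∑ jn ∈ Finset.range (i+1), x jn := by
  rw [← Finset.sum_subset (Finset.range_subset_range.2 (show i+1 ≤ g+1 by omega))
      (fun jn _ hjn => if_neg (by simp only [Finset.mem_range] at hjn; omega))]
  exact Finset.sum_congr rfl (fun jn hjn => if_pos (by simp only [Finset.mem_range] at hjn; omega))

lemma Tvec0_range (i : ℕ) (a : ℕ → ℕ) (d : Fin (g+1) →₀ ℕ) :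
    Tvec g i a d 0 = ∑ jn ∈ Finset.range (g+1), (if jn ≤ i then dfun d jn * a jn else 0) := by
  rw [Tvec_apply0]
  exact finsum_to_range _ _ (fun j => by rw [dfun_coe])

variable {a e n : ℕ → ℕ}

lemma Tvec_inj (ha0 : 0 < a 0) (he : ∀ i, e i = (Finset.range (i + 1)).gcd a)
    (hn : ∀ i, 1 ≤ i → i ≤ g → n i * e i = e (i - 1)) {i : ℕ} (hi : i ≤ g)
    {d d' : Fin (g+1) →₀ ℕ}
    (hd : ∀ j : Fin (g+1), 1 ≤ (j:ℕ) → (j:ℕ) ≤ i → d j < n (j:ℕ))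
    (hd' : ∀ j : Fin (g+1), 1 ≤ (j:ℕ) → (j:ℕ) ≤ i → d' j < n (j:ℕ))
    (hT : Tvec g i a d = Tvec g i a d') : d = d' := by
  have h0 := DFunLike.congr_fun hT (0 : Fin (g+1))
  rw [Tvec0_range, Tvec0_range, range_ite_sum hi, range_ite_sum hi] at h0
  have hu := uniq (g := g) ha0 he hn i hi (dfun d) (dfun d')
    (fun j h1 h2 => by
      rw [dfun, dif_pos (show j < g+1 by omega)]; exact hd _ h1 h2)
    (fun j h1 h2 => by
      rw [dfun, dif_pos (show j < g+1 by omega)]; exact hd' _ h1 h2)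
    h0
  ext j
  rcases le_or_gt (j:ℕ) i with hj | hj
  · have := hu (j:ℕ) hj
    rwa [dfun_coe, dfun_coe] at this
  · rw [← Tvec_apply_gt i a d j hj, ← Tvec_apply_gt i a d' j hj, hT]

lemma wt_inj (ha0 : 0 < a 0) (he : ∀ i, e i = (Finset.range (i + 1)).gcd a)
    (hn : ∀ i, 1 ≤ i → i ≤ g → n i * e i = e (i - 1))
    {d d' : Fin (g+1) →₀ ℕ}
    (hd : ∀ j : Fin (g+1), 1 ≤ (j:ℕ) → d j < n (j:ℕ))
    (hd' : ∀ j : Fin (g+1), 1 ≤ (j:ℕ) → d' j < n (j:ℕ))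
    (hw : wt g a d = wt g a d') : d = d' := by
  have hcv1 := finsum_to_range (fun j : Fin (g+1) => d j * a (j:ℕ))
    (fun jn => dfun d jn * a jn) (fun j => by simp)
  have hcv2 := finsum_to_range (fun j : Fin (g+1) => d' j * a (j:ℕ))
    (fun jn => dfun d' jn * a jn) (fun j => by simp)
  rw [wt, wt, hcv1, hcv2] at hw
  have hu := uniq (g := g) ha0 he hn g le_rfl (dfun d) (dfun d')
    (fun j h1 h2 => by
      rw [dfun, dif_pos (show j < g+1 by omega)]; exact hd _ h1)
    (fun j h1 h2 => by
      rw [dfun, dif_pos (show j < g+1 by omega)]; exact hd' _ h1)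
    hw
  ext j
  have := hu (j:ℕ) (by omega)
  rwa [dfun_coe, dfun_coe] at this

variable {c : Fin g → ℕ → ℕ}

lemma sum_cvec_weights (hc1 : ∀ (l : Fin g) j, c l j ≠ 0 → j < (l:ℕ)+1) (l : Fin g)
    (x : ℕ → ℕ) {K : ℕ} (hK : (l:ℕ)+1 ≤ K) :
    ∑ jn ∈ Finset.range K, c l jn * x jn = ∑ jn ∈ Finset.range ((l:ℕ)+1), c l jn * x jn := by
  refine (Finset.sum_subset (Finset.range_subset_range.2 hK) (fun jn _ hjn => ?_)).symm
  have hz : c l jn = 0 := by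
    by_contra h
    exact absurd (hc1 l jn h) (by simp only [Finset.mem_range] at hjn; omega)
  rw [hz, zero_mul]

lemma wt_cvec (hc1 : ∀ (l : Fin g) j, c l j ≠ 0 → j < (l:ℕ)+1)
    (hc2 : ∀ l : Fin g, n ((l:ℕ)+1) * a ((l:ℕ)+1) = ∑ jn ∈ Finset.range ((l:ℕ)+1), c l jn * a jn)
    (l : Fin g) : wt g a (cvec g c l) = n ((l:ℕ)+1) * a ((l:ℕ)+1) := by
  have hcv := finsum_to_range (fun j : Fin (g+1) => (cvec g c l) j * a (j:ℕ))
    (fun jn => c l jn * a jn) (fun j => rfl)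
  rw [wt, hcv, sum_cvec_weights hc1 l a (by have := l.isLt; omega)]
  exact (hc2 l).symm

lemma wt_single (j : Fin (g+1)) (N : ℕ) :
    wt g a (Finsupp.single j N) = N * a (j:ℕ) := by
  rw [wt, Finset.sum_eq_single j]
  · rw [Finsupp.single_eq_same]
  · intro j' _ hne; rw [Finsupp.single_eq_of_ne' (Ne.symm hne), zero_mul]
  · intro h; exact absurd (Finset.mem_univ j) h

lemma phi_f_zero (hc1 : ∀ (l : Fin g) j, c l j ≠ 0 → j < (l:ℕ)+1)
    (hc2 : ∀ l : Fin g, n ((l:ℕ)+1) * a ((l:ℕ)+1) = ∑ jn ∈ Finset.range ((l:ℕ)+1), c l jn * a jn)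
    (l : Fin g) :
    (aeval (fun i : Fin (g + 1) => (Polynomial.X : Polynomial ℂ) ^ a i)) (fpoly g n c l) = 0 := by
  rw [fpoly, map_sub, X_pow_eq_monomial, phi_monomial, phi_monomial, wt_single, wt_cvec hc1 hc2]
  have : ((l.succ : Fin (g+1)) : ℕ) = (l:ℕ)+1 := rfl
  rw [this, sub_self]

end Alg2


section Alg3
variable {g : ℕ} {a e n : ℕ → ℕ} {c : Fin g → ℕ → ℕ}

lemma Tvec_single0 {i : ℕ} (a : ℕ → ℕ) (j₀ : Fin (g+1)) (N : ℕ) (hj₀ : (j₀:ℕ) ≤ i) :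
    Tvec g i a (Finsupp.single j₀ N) 0 = N * a (j₀:ℕ) := by
  rw [Tvec_apply0, Finset.sum_eq_single j₀]
  · rw [if_pos hj₀, Finsupp.single_eq_same]
  · intro j _ hne
    rw [Finsupp.single_eq_of_ne' (Ne.symm hne)]
    simp
  · intro h; exact absurd (Finset.mem_univ j₀) h

lemma Tvec_cvec0 (hc1 : ∀ (l : Fin g) j, c l j ≠ 0 → j < (l:ℕ)+1)
    (hc2 : ∀ l : Fin g, n ((l:ℕ)+1) * a ((l:ℕ)+1) = ∑ jn ∈ Finset.range ((l:ℕ)+1), c l jn * a jn)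
    {i : ℕ} (hi : i ≤ g) (l : Fin g) (hl : (l:ℕ)+1 ≤ i) :
    Tvec g i a (cvec g c l) 0 = n ((l:ℕ)+1) * a ((l:ℕ)+1) := by
  rw [Tvec0_range, range_ite_sum hi]
  have h1 : ∀ jn ∈ Finset.range (i+1), dfun (cvec g c l) jn * a jn = c l jn * a jn := by
    intro jn hjn; simp only [Finset.mem_range] at hjn
    rw [dfun, dif_pos (by omega)]; rfl
  rw [Finset.sum_congr rfl h1, sum_cvec_weights hc1 l a (by omega)]
  exact (hc2 l).symm

lemma psi_f_zero (hc1 : ∀ (l : Fin g) j, c l j ≠ 0 → j < (l:ℕ)+1)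
    (hc2 : ∀ l : Fin g, n ((l:ℕ)+1) * a ((l:ℕ)+1) = ∑ jn ∈ Finset.range ((l:ℕ)+1), c l jn * a jn)
    {i : ℕ} (hi : i ≤ g) (l : Fin g) (hl : (l:ℕ)+1 ≤ i) :
    psi g i a (fpoly g n c l) = 0 := by
  rw [fpoly, map_sub, X_pow_eq_monomial, psi_monomial, psi_monomial, sub_eq_zero]
  have hls : ((l.succ : Fin (g+1)) : ℕ) = (l:ℕ)+1 := rfl
  have hTeq : Tvec g i a (Finsupp.single l.succ (n ((l:ℕ)+1))) = Tvec g i a (cvec g c l) := by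
    ext j'
    rcases Nat.eq_zero_or_pos (j':ℕ) with h0 | h0
    · have hj' : j' = 0 := Fin.ext h0
      rw [hj', Tvec_single0 a l.succ _ (by rw [hls]; omega),
        Tvec_cvec0 hc1 hc2 hi l hl, hls]
    · rcases le_or_gt (j':ℕ) i with h1 | h1
      · rw [Tvec_apply_mid _ _ _ _ h0 h1, Tvec_apply_mid _ _ _ _ h0 h1]
      · rw [Tvec_apply_gt _ _ _ _ h1, Tvec_apply_gt _ _ _ _ h1]
        rw [Finsupp.single_eq_of_ne' (by
          intro hh; rw [← hh, hls] at h1; omega), cvec_apply]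
        symm
        by_contra hcz
        have := hc1 l _ hcz
        omega
  rw [hTeq]

lemma psi_f_ne (hc1 : ∀ (l : Fin g) j, c l j ≠ 0 → j < (l:ℕ)+1)
    {i : ℕ} (l : Fin g) (hl : i < (l:ℕ)+1) (hN : 0 < n ((l:ℕ)+1)) :
    psi g i a (fpoly g n c l) ≠ 0 := by
  have hls : ((l.succ : Fin (g+1)) : ℕ) = (l:ℕ)+1 := rfl
  rw [fpoly, map_sub, X_pow_eq_monomial, psi_monomial, psi_monomial]
  intro h
  rw [sub_eq_zero] at h
  have hco := congrArg (coeff (Tvec g i a (Finsupp.single l.succ (n ((l:ℕ)+1))))) h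
  rw [coeff_monomial, coeff_monomial, if_pos rfl, if_neg ?hne] at hco
  · exact one_ne_zero hco
  case hne =>
    intro hT
    have h1 := DFunLike.congr_fun hT l.succ
    rw [Tvec_apply_gt _ _ _ _ (show i < ((l.succ : Fin (g+1)):ℕ) by rw [hls]; omega),
        Tvec_apply_gt _ _ _ _ (show i < ((l.succ : Fin (g+1)):ℕ) by rw [hls]; omega)] at h1
    rw [cvec_apply, Finsupp.single_eq_same, hls] at h1
    have hcz : c l ((l:ℕ)+1) = 0 := by
      by_contra hcz
      have := hc1 l _ hcz
      omega
    omega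

end Alg3


section Alg4
variable {g : ℕ} {a e n : ℕ → ℕ} {c : Fin g → ℕ → ℕ}

lemma geom_bound {B : ℕ} (hB1 : 1 ≤ B) :
    ∀ K : ℕ, ∀ u : ℕ → ℕ, (∀ j, j < K → u j < B) →
    ∑ jn ∈ Finset.range K, u jn * B ^ jn < B ^ K := by
  intro K
  induction K with
  | zero => intro u _; simp
  | succ k ih =>
    intro u hu
    rw [Finset.sum_range_succ]
    have h1 := ih u (fun j hj => hu j (by omega))
    have h2 : u k ≤ B - 1 := by have := hu k (by omega); omega
    have h3 : u k * B ^ k ≤ (B - 1) * B ^ k := Nat.mul_le_mul_right _ h2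
    obtain ⟨B', rfl⟩ : ∃ B', B = B' + 1 := ⟨B - 1, by omega⟩
    have h4 : (B' + 1 - 1) * (B' + 1) ^ k + (B' + 1) ^ k = (B' + 1) ^ (k + 1) := by
      rw [pow_succ]
      simp only [Nat.add_sub_cancel]
      ring
    omega

lemma mu_cvec_lt (hc1 : ∀ (l : Fin g) j, c l j ≠ 0 → j < (l:ℕ)+1)
    (hNpos : ∀ l : Fin g, 0 < n ((l:ℕ)+1)) {B : ℕ}
    (hB : ∀ (l : Fin g) jn, c l jn < B) (hB1 : 1 ≤ B) (l : Fin g) :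
    wt g (fun jn => B ^ jn) (cvec g c l) < n ((l:ℕ)+1) * B ^ ((l:ℕ)+1) := by
  have hcv := finsum_to_range (fun j : Fin (g+1) => (cvec g c l) j * B ^ (j:ℕ))
    (fun jn => c l jn * B ^ jn) (fun j => rfl)
  rw [wt, hcv, sum_cvec_weights hc1 l _ (by have := l.isLt; omega)]
  calc ∑ jn ∈ Finset.range ((l:ℕ)+1), c l jn * B ^ jn
      < B ^ ((l:ℕ)+1) := geom_bound hB1 _ _ (fun j _ => hB l j)
    _ ≤ n ((l:ℕ)+1) * B ^ ((l:ℕ)+1) := Nat.le_mul_of_pos_left _ (hNpos l)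

lemma wt_add (b : ℕ → ℕ) (d1 d2 : Fin (g+1) →₀ ℕ) :
    wt g b (d1 + d2) = wt g b d1 + wt g b d2 := by
  rw [wt, wt, wt, ← Finset.sum_add_distrib]
  exact Finset.sum_congr rfl (fun j _ => by rw [Finsupp.add_apply, add_mul])

lemma reduce_monomial (hc1 : ∀ (l : Fin g) j, c l j ≠ 0 → j < (l:ℕ)+1)
    (hNpos : ∀ l : Fin g, 0 < n ((l:ℕ)+1)) {B : ℕ}
    (hB : ∀ (l : Fin g) jn, c l jn < B) (hB1 : 1 ≤ B) {i : ℕ} (hi : i ≤ g) :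
    ∀ M : ℕ, ∀ (d : Fin (g+1) →₀ ℕ) (r : ℂ), wt g (fun jn => B ^ jn) d = M →
    ∃ q : MvPolynomial (Fin (g+1)) ℂ,
      (∀ d' ∈ q.support, ∀ j : Fin (g+1), 1 ≤ (j:ℕ) → (j:ℕ) ≤ i → d' j < n (j:ℕ)) ∧
      monomial d r - q ∈
        Ideal.span {x : MvPolynomial (Fin (g+1)) ℂ | ∃ l : Fin g, (l:ℕ)+1 ≤ i ∧ fpoly g n c l = x} := by
  intro M
  induction M using Nat.strong_induction_on with
  | _ M ih =>
    intro d r hM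
    by_cases hred : ∀ j : Fin (g+1), 1 ≤ (j:ℕ) → (j:ℕ) ≤ i → d j < n (j:ℕ)
    · refine ⟨monomial d r, ?_, by simp⟩
      intro d' hd'
      have hsub := MvPolynomial.support_monomial_subset (s := d) (a := r)
      have : d' = d := by simpa using hsub hd'
      rw [this]; exact hred
    · push_neg at hred
      obtain ⟨j₀, hj1, hj2, hj3⟩ := hred
      have hg1 : (j₀:ℕ) - 1 < g := by have := j₀.isLt; omega
      set l : Fin g := ⟨(j₀:ℕ) - 1, hg1⟩ with hldef
      have hlv : (l:ℕ) + 1 = (j₀:ℕ) := by show (j₀:ℕ) - 1 + 1 = (j₀:ℕ); omega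
      have hls : (l.succ : Fin (g+1)) = j₀ := Fin.ext (by
        show (l:ℕ) + 1 = (j₀:ℕ); exact hlv)
      have hnl : n ((l:ℕ)+1) = n (j₀:ℕ) := by rw [hlv]
      have hle : Finsupp.single j₀ (n (j₀:ℕ)) ≤ d := Finsupp.single_le_iff.2 hj3
      set d' := d - Finsupp.single j₀ (n (j₀:ℕ)) with hd'def
      have hdd : d' + Finsupp.single j₀ (n (j₀:ℕ)) = d := tsub_add_cancel_of_le hle
      have hkey : monomial d r = monomial d' r * fpoly g n c l
          + monomial (d' + cvec g c l) r := by
        rw [fpoly, mul_sub, X_pow_eq_monomial, monomial_mul, monomial_mul, mul_one,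
          hls, hnl, hdd]
        ring
      have hmu : wt g (fun jn => B ^ jn) (d' + cvec g c l) < M := by
        have h1 : wt g (fun jn => B ^ jn) d
            = wt g (fun jn => B ^ jn) d' + n (j₀:ℕ) * B ^ (j₀:ℕ) := by
          rw [← hdd, wt_add, wt_single]
        have h2 := wt_add (g := g) (fun jn => B ^ jn) d' (cvec g c l)
        have h3 := mu_cvec_lt hc1 hNpos hB hB1 l
        rw [hnl, hlv] at h3
        omega
      obtain ⟨q, hq1, hq2⟩ := ih _ hmu (d' + cvec g c l) r rfl
      refine ⟨q, hq1, ?_⟩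
      have hmem : monomial d' r * fpoly g n c l ∈
          Ideal.span {x : MvPolynomial (Fin (g+1)) ℂ | ∃ l : Fin g, (l:ℕ)+1 ≤ i ∧ fpoly g n c l = x} :=
        Ideal.mul_mem_left _ _ (Ideal.subset_span ⟨l, by omega, rfl⟩)
      have hsplit : monomial d r - q = monomial d' r * fpoly g n c l
          + (monomial (d' + cvec g c l) r - q) := by rw [hkey]; ring
      rw [hsplit]; exact Ideal.add_mem _ hmem hq2

lemma reduce_poly (hc1 : ∀ (l : Fin g) j, c l j ≠ 0 → j < (l:ℕ)+1)
    (hNpos : ∀ l : Fin g, 0 < n ((l:ℕ)+1)) {B : ℕ}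
    (hB : ∀ (l : Fin g) jn, c l jn < B) (hB1 : 1 ≤ B) {i : ℕ} (hi : i ≤ g)
    (p : MvPolynomial (Fin (g+1)) ℂ) :
    ∃ q : MvPolynomial (Fin (g+1)) ℂ,
      (∀ d' ∈ q.support, ∀ j : Fin (g+1), 1 ≤ (j:ℕ) → (j:ℕ) ≤ i → d' j < n (j:ℕ)) ∧
      p - q ∈
        Ideal.span {x : MvPolynomial (Fin (g+1)) ℂ | ∃ l : Fin g, (l:ℕ)+1 ≤ i ∧ fpoly g n c l = x} := by
  induction p using MvPolynomial.induction_on' with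
  | monomial d r => exact reduce_monomial hc1 hNpos hB hB1 hi _ d r rfl
  | add p1 p2 ih1 ih2 =>
    obtain ⟨q1, hq11, hq12⟩ := ih1
    obtain ⟨q2, hq21, hq22⟩ := ih2
    refine ⟨q1 + q2, fun d' hd' => ?_, ?_⟩
    · rcases Finset.mem_union.1 (MvPolynomial.support_add hd') with h | h
      · exact hq11 d' h
      · exact hq21 d' h
    · have : p1 + p2 - (q1 + q2) = (p1 - q1) + (p2 - q2) := by ring
      rw [this]; exact Ideal.add_mem _ hq12 hq22

end Alg4


section Alg5
variable {g : ℕ} {a e n : ℕ → ℕ}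

lemma psi_inj (ha0 : 0 < a 0) (he : ∀ i, e i = (Finset.range (i + 1)).gcd a)
    (hn : ∀ i, 1 ≤ i → i ≤ g → n i * e i = e (i - 1)) {i : ℕ} (hi : i ≤ g)
    (q : MvPolynomial (Fin (g+1)) ℂ)
    (hq : ∀ d ∈ q.support, ∀ j : Fin (g+1), 1 ≤ (j:ℕ) → (j:ℕ) ≤ i → d j < n (j:ℕ))
    (h0 : psi g i a q = 0) : q = 0 := by
  by_contra hne
  obtain ⟨d₀, hd₀⟩ : ∃ d₀, d₀ ∈ q.support := by
    rcases Finset.eq_empty_or_nonempty q.support with h | h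
    · exact absurd (MvPolynomial.support_eq_empty.1 h) hne
    · exact h
  have hrepr : psi g i a q = ∑ d ∈ q.support, monomial (Tvec g i a d) (coeff d q) := by
    conv_lhs => rw [← MvPolynomial.support_sum_monomial_coeff q]
    rw [map_sum]
    exact Finset.sum_congr rfl (fun d _ => psi_monomial i a d _)
  have hco : coeff (Tvec g i a d₀) (psi g i a q) = coeff d₀ q := by
    rw [hrepr, MvPolynomial.coeff_sum, Finset.sum_eq_single d₀]
    · rw [coeff_monomial, if_pos rfl]
    · intro d hd hne'
      rw [coeff_monomial, if_neg]
      intro hT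
      exact hne' (Tvec_inj ha0 he hn hi (hq d hd) (hq d₀ hd₀) hT)
    · intro h; exact absurd hd₀ h
  rw [h0] at hco
  simp only [coeff_zero] at hco
  exact (MvPolynomial.mem_support_iff.1 hd₀) hco.symm

lemma phi_inj (ha0 : 0 < a 0) (he : ∀ i, e i = (Finset.range (i + 1)).gcd a)
    (hn : ∀ i, 1 ≤ i → i ≤ g → n i * e i = e (i - 1))
    (q : MvPolynomial (Fin (g+1)) ℂ)
    (hq : ∀ d ∈ q.support, ∀ j : Fin (g+1), 1 ≤ (j:ℕ) → (j:ℕ) ≤ g → d j < n (j:ℕ))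
    (h0 : aeval (fun i : Fin (g+1) => (Polynomial.X : Polynomial ℂ) ^ a i) q = 0) : q = 0 := by
  by_contra hne
  obtain ⟨d₀, hd₀⟩ : ∃ d₀, d₀ ∈ q.support := by
    rcases Finset.eq_empty_or_nonempty q.support with h | h
    · exact absurd (MvPolynomial.support_eq_empty.1 h) hne
    · exact h
  have hrepr : aeval (fun i : Fin (g+1) => (Polynomial.X : Polynomial ℂ) ^ a i) q
      = ∑ d ∈ q.support, Polynomial.C (coeff d q) * Polynomial.X ^ wt g a d := by
    conv_lhs => rw [← MvPolynomial.support_sum_monomial_coeff q]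
    rw [map_sum]
    exact Finset.sum_congr rfl (fun d _ => phi_monomial a d _)
  have hco : Polynomial.coeff
      ((aeval (fun i : Fin (g+1) => (Polynomial.X : Polynomial ℂ) ^ a i)) q) (wt g a d₀)
      = coeff d₀ q := by
    rw [hrepr, Polynomial.finset_sum_coeff, Finset.sum_eq_single d₀]
    · rw [Polynomial.coeff_C_mul, Polynomial.coeff_X_pow, if_pos rfl, mul_one]
    · intro d hd hne'
      rw [Polynomial.coeff_C_mul, Polynomial.coeff_X_pow, if_neg, mul_zero]
      intro hw
      refine hne' (wt_inj ha0 he hn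
        (fun j h1 => hq d hd j h1 (by have := j.isLt; omega))
        (fun j h1 => hq d₀ hd₀ j h1 (by have := j.isLt; omega)) hw.symm)
    · intro h; exact absurd hd₀ h
  rw [h0] at hco
  simp only [Polynomial.coeff_zero] at hco
  exact (MvPolynomial.mem_support_iff.1 hd₀) hco.symm

end Alg5


lemma smul_regular_quot {R : Type*} [CommRing R] (I : Ideal R) (r : R)
    (h : ∀ p : R, r * p ∈ I → p ∈ I) :
    IsSMulRegular (R ⧸ (I • ⊤ : Submodule R R)) r := by
  have hIt : (I • ⊤ : Submodule R R) = I := by rw [Ideal.smul_eq_mul, Ideal.mul_top]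
  intro x y hxy
  obtain ⟨p, rfl⟩ := Submodule.Quotient.mk_surjective _ x
  obtain ⟨p', rfl⟩ := Submodule.Quotient.mk_surjective _ y
  have hxy' : Submodule.Quotient.mk (r • p)
      = (Submodule.Quotient.mk (r • p') : R ⧸ (I • ⊤ : Submodule R R)) := by
    rw [Submodule.Quotient.mk_smul, Submodule.Quotient.mk_smul]; exact hxy
  rw [Submodule.Quotient.eq, hIt] at hxy'
  rw [Submodule.Quotient.eq, hIt]
  have hm : r * (p - p') ∈ I := by
    have : r • p - r • p' = r * (p - p') := by
      rw [smul_eq_mul, smul_eq_mul]; ring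
    rwa [this] at hxy'
  exact h _ hm

end Stmt3Aux

open Stmt3Aux in
theorem stmt3' (g : ℕ) (a : ℕ → ℕ) (hpos : ∀ i, i ≤ g → 0 < a i)
    (e : ℕ → ℕ) (he : ∀ i, e i = (Finset.range (i + 1)).gcd a)
    (hgcd : e g = 1)
    (n : ℕ → ℕ) (hn : ∀ i, 1 ≤ i → i ≤ g → n i * e i = e (i - 1))
    (hfree : ∀ i, 1 ≤ i → i ≤ g →
      n i * a i ∈ AddSubmonoid.closure (a '' Set.Iio i)) :
    (∃ f : Fin g → MvPolynomial (Fin (g + 1)) ℂ,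
      RingHom.ker (MvPolynomial.aeval
          (fun i : Fin (g + 1) => (Polynomial.X : Polynomial ℂ) ^ a i) :
          MvPolynomial (Fin (g + 1)) ℂ →ₐ[ℂ] Polynomial ℂ).toRingHom
        = Ideal.span (Set.range f) ∧
      RingTheory.Sequence.IsRegular (MvPolynomial (Fin (g + 1)) ℂ) (List.ofFn f)) ∧
    ((sInf {c : ℕ | ∀ m : ℕ, c ≤ m →
        m ∈ AddSubmonoid.closure (a '' Set.Iic g)} : ℕ) : ℤ)
      = ∑ i ∈ Finset.Icc 1 g, ((n i : ℤ) - 1) * a i - a 0 + 1 := by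
  classical
  have ha0 : 0 < a 0 := hpos 0 (by omega)
  refine ⟨?_, conductor_formula hpos he hgcd hn hfree⟩
  -- choose representations
  have hrep : ∀ l : Fin g, ∃ cl : ℕ → ℕ, (∀ j, cl j ≠ 0 → j < (l:ℕ)+1) ∧
      n ((l:ℕ)+1) * a ((l:ℕ)+1) = ∑ jn ∈ Finset.range ((l:ℕ)+1), cl jn * a jn := by
    intro l
    obtain ⟨cl, h1, h2⟩ := closure_rep (a := a) (S := Set.Iio ((l:ℕ)+1))
      (k := (l:ℕ)+1) (fun j hj => hj) (hfree ((l:ℕ)+1) (by omega) (by have := l.isLt; omega))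
    exact ⟨cl, fun j hj => h1 j hj, h2⟩
  choose c hc1 hc2 using hrep
  set R := MvPolynomial (Fin (g+1)) ℂ with hR
  set f : Fin g → MvPolynomial (Fin (g+1)) ℂ := fpoly g n c with hf
  have hNpos : ∀ l : Fin g, 0 < n ((l:ℕ)+1) := fun l =>
    npos ha0 he hn (by omega) (by have := l.isLt; omega)
  set B : ℕ := 1 + ∑ l : Fin g, ∑ jn ∈ Finset.range (g+1), c l jn with hBdef
  have hB1 : 1 ≤ B := by omega
  have hB : ∀ (l : Fin g) jn, c l jn < B := by
    intro l jn
    rcases lt_or_ge jn (g+1) with h | h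
    · have h1 : c l jn ≤ ∑ jn' ∈ Finset.range (g+1), c l jn' :=
        Finset.single_le_sum (fun _ _ => Nat.zero_le _) (Finset.mem_range.2 h)
      have h2 : (∑ jn' ∈ Finset.range (g+1), c l jn')
          ≤ ∑ l' : Fin g, ∑ jn' ∈ Finset.range (g+1), c l' jn' :=
        Finset.single_le_sum (f := fun l' : Fin g => ∑ jn' ∈ Finset.range (g+1), c l' jn')
          (fun _ _ => Nat.zero_le _) (Finset.mem_univ l)
      omega
    · have hz : c l jn = 0 := by
        by_contra h'
        have := hc1 l jn h'
        have := l.isLt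
        omega
      omega
  -- the span of the first i generators
  set J : ℕ → Ideal (MvPolynomial (Fin (g+1)) ℂ) := fun i =>
    Ideal.span {x : MvPolynomial (Fin (g+1)) ℂ | ∃ l : Fin g, (l:ℕ)+1 ≤ i ∧ fpoly g n c l = x}
    with hJ
  -- the core regularity statement
  have hcore : ∀ (i : ℕ) (hig : i < g) (r : MvPolynomial (Fin (g+1)) ℂ),
      f ⟨i, hig⟩ * r ∈ J i → r ∈ J i := by
    intro i hig r hr
    obtain ⟨q, hq1, hq2⟩ := reduce_poly hc1 hNpos hB hB1 (le_of_lt hig) r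
    have hJker : J i ≤ RingHom.ker (psi g i a).toRingHom := by
      rw [hJ, Ideal.span_le]
      rintro x ⟨l, hl, rfl⟩
      simp only [SetLike.mem_coe, RingHom.mem_ker]
      exact psi_f_zero hc1 hc2 (le_of_lt hig) l hl
    have h1 : psi g i a (f ⟨i, hig⟩ * q) = 0 := by
      have hsplit : f ⟨i, hig⟩ * q = f ⟨i, hig⟩ * r - f ⟨i, hig⟩ * (r - q) := by ring
      rw [hsplit, map_sub]
      have hz1 : psi g i a (f ⟨i, hig⟩ * r) = 0 := hJker hr
      have hz2 : psi g i a (f ⟨i, hig⟩ * (r - q)) = 0 :=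
        hJker (Ideal.mul_mem_left _ _ hq2)
      rw [hz1, hz2, sub_zero]
    rw [map_mul] at h1
    have hfne : psi g i a (f ⟨i, hig⟩) ≠ 0 :=
      psi_f_ne hc1 ⟨i, hig⟩ (by show i < i + 1; omega) (hNpos ⟨i, hig⟩)
    have hq0 : psi g i a q = 0 := by
      rcases mul_eq_zero.1 h1 with h | h
      · exact absurd h hfne
      · exact h
    have hqz : q = 0 := psi_inj ha0 he hn (le_of_lt hig) q hq1 hq0
    rw [hqz, sub_zero] at hq2
    exact hq2
  -- kernel of phi is J g
  have hkerJ : RingHom.ker (MvPolynomial.aeval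
      (fun i : Fin (g + 1) => (Polynomial.X : Polynomial ℂ) ^ a i) :
      MvPolynomial (Fin (g + 1)) ℂ →ₐ[ℂ] Polynomial ℂ).toRingHom = J g := by
    apply le_antisymm
    · intro p hp
      rw [RingHom.mem_ker] at hp
      obtain ⟨q, hq1, hq2⟩ := reduce_poly hc1 hNpos hB hB1 (le_refl g) p
      have hJle : J g ≤ RingHom.ker (MvPolynomial.aeval
          (fun i : Fin (g + 1) => (Polynomial.X : Polynomial ℂ) ^ a i) :
          MvPolynomial (Fin (g + 1)) ℂ →ₐ[ℂ] Polynomial ℂ).toRingHom := by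
        rw [hJ, Ideal.span_le]
        rintro x ⟨l, hl, rfl⟩
        simp only [SetLike.mem_coe, RingHom.mem_ker]
        exact phi_f_zero hc1 hc2 l
      have hqz : q = 0 := by
        apply phi_inj ha0 he hn q hq1
        have hp' : (MvPolynomial.aeval
            (fun i : Fin (g + 1) => (Polynomial.X : Polynomial ℂ) ^ a i)) p = 0 := hp
        have hz : (MvPolynomial.aeval
            (fun i : Fin (g + 1) => (Polynomial.X : Polynomial ℂ) ^ a i)) (p - q) = 0 :=
          hJle hq2
        rw [map_sub, hp', zero_sub, neg_eq_zero] at hz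
        exact hz
      rw [hqz, sub_zero] at hq2
      exact hq2
    · intro x hx
      rw [hJ] at hx
      have hJle : J g ≤ RingHom.ker (MvPolynomial.aeval
          (fun i : Fin (g + 1) => (Polynomial.X : Polynomial ℂ) ^ a i) :
          MvPolynomial (Fin (g + 1)) ℂ →ₐ[ℂ] Polynomial ℂ).toRingHom := by
        rw [hJ, Ideal.span_le]
        rintro x ⟨l, hl, rfl⟩
        simp only [SetLike.mem_coe, RingHom.mem_ker]
        exact phi_f_zero hc1 hc2 l
      exact hJle hx
  have hsets : {x : MvPolynomial (Fin (g+1)) ℂ | ∃ l : Fin g, (l:ℕ)+1 ≤ g ∧ fpoly g n c l = x}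
      = Set.range f := by
    ext x
    simp only [Set.mem_setOf_eq, Set.mem_range]
    constructor
    · rintro ⟨l, _, rfl⟩; exact ⟨l, rfl⟩
    · rintro ⟨l, rfl⟩; exact ⟨l, by have := l.isLt; omega, rfl⟩
  have hJrange : J g = Ideal.span (Set.range f) := congrArg Ideal.span hsets
  -- identification of ofList of take with J
  have hofList : ∀ i : ℕ, i ≤ g → Ideal.ofList ((List.ofFn f).take i) = J i := by
    intro i hig
    have hsets2 : {r : MvPolynomial (Fin (g+1)) ℂ | r ∈ (List.ofFn f).take i}
        = {x : MvPolynomial (Fin (g+1)) ℂ | ∃ l : Fin g, (l:ℕ)+1 ≤ i ∧ fpoly g n c l = x} := by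
      ext x
      simp only [Set.mem_setOf_eq]
      constructor
      · intro hx
        obtain ⟨k, hk, hget⟩ := List.mem_iff_getElem.1 hx
        have hlen : ((List.ofFn f).take i).length = min i g := by simp
        rw [hlen] at hk
        have hkg : k < g := by omega
        refine ⟨⟨k, hkg⟩, by show k + 1 ≤ i; omega, ?_⟩
        rw [← hget, List.getElem_take]
        simp [hf]
      · rintro ⟨l, hl, rfl⟩
        apply List.mem_iff_getElem.2
        refine ⟨(l:ℕ), by simp only [List.length_take, List.length_ofFn]; omega, ?_⟩
        rw [List.getElem_take]
        simp [hf]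
    exact congrArg Ideal.span hsets2
  -- smul top
  have hsmultop : ∀ I : Ideal (MvPolynomial (Fin (g+1)) ℂ),
      (I • (⊤ : Submodule (MvPolynomial (Fin (g+1)) ℂ) (MvPolynomial (Fin (g+1)) ℂ))
        : Submodule (MvPolynomial (Fin (g+1)) ℂ) (MvPolynomial (Fin (g+1)) ℂ)) = I := by
    intro I
    rw [Ideal.smul_eq_mul, Ideal.mul_top]
  refine ⟨f, by rw [hkerJ, hJrange], ?_⟩
  constructor
  · -- weakly regular
    constructor
    intro i hlen'
    have hlen : i < g := by rwa [List.length_ofFn] at hlen'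
    apply smul_regular_quot
    intro p hp
    rw [hofList i (by omega)] at hp ⊢
    have hget : (List.ofFn f)[i]'hlen' = f ⟨i, hlen⟩ := by simp
    rw [hget] at hp
    exact hcore i hlen p hp
  · -- quotient nonzero
    intro htop
    have h1 : (1 : MvPolynomial (Fin (g+1)) ℂ) ∈
        (Ideal.ofList (List.ofFn f) • (⊤ : Submodule _ _)
          : Submodule (MvPolynomial (Fin (g+1)) ℂ) (MvPolynomial (Fin (g+1)) ℂ)) := by
      rw [← htop]; trivial
    rw [hsmultop] at h1
    have hofl : Ideal.ofList (List.ofFn f) = J g := by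
      have := hofList g (le_refl g)
      rwa [List.take_of_length_le (by simp)] at this
    rw [hofl, ← hkerJ, RingHom.mem_ker] at h1
    have : (1 : Polynomial ℂ) = 0 := by simpa using h1
    exact one_ne_zero this

/-- A free numerical semigroup `Γ = ⟨a₀,…,a_g⟩` is a complete intersection:
the kernel of `u_i ↦ t^{a_i}` is generated by a regular sequence of length `g`;
in particular the conductor of `Γ` equals `∑_{i=1}^g (n_i − 1)a_i − a₀ + 1`. -/
theorem stmt3 (g : ℕ) (a : ℕ → ℕ) (hpos : ∀ i, i ≤ g → 0 < a i)
    (e : ℕ → ℕ) (he : ∀ i, e i = (Finset.range (i + 1)).gcd a)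
    (hgcd : e g = 1)
    (n : ℕ → ℕ) (hn : ∀ i, 1 ≤ i → i ≤ g → n i * e i = e (i - 1))
    (hfree : ∀ i, 1 ≤ i → i ≤ g →
      n i * a i ∈ AddSubmonoid.closure (a '' Set.Iio i)) :
    (∃ f : Fin g → MvPolynomial (Fin (g + 1)) ℂ,
      RingHom.ker (MvPolynomial.aeval
          (fun i : Fin (g + 1) => (Polynomial.X : Polynomial ℂ) ^ a i) :
          MvPolynomial (Fin (g + 1)) ℂ →ₐ[ℂ] Polynomial ℂ).toRingHom
        = Ideal.span (Set.range f) ∧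
      RingTheory.Sequence.IsRegular (MvPolynomial (Fin (g + 1)) ℂ) (List.ofFn f)) ∧
    ((sInf {c : ℕ | ∀ m : ℕ, c ≤ m →
        m ∈ AddSubmonoid.closure (a '' Set.Iic g)} : ℕ) : ℤ)
      = ∑ i ∈ Finset.Icc 1 g, ((n i : ℤ) - 1) * a i - a 0 + 1 := by
  exact stmt3' g a hpos e he hgcd n hn hfree
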